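/- arXiv:2507.06431 — 5 statements merged into one kernel-verified Lean document; each statement's English description precedes it below -/
import Mathlib

section
/- Let a, b, c : ℝ → ℝ be given coefficient functions, let g0, h0 be nonzero real constants, and let α, β, γ : ℝ → ℝ be differentiable functions satisfying the Riccati system α'(t) + b(t) + 2c(t)α(t) + 4a(t)α(t)² = 0, β'(t) + (c(t) + 4a(t)α(t))β(t) = 0, γ'(t) + a(t)β(t)² = 0. Suppose d(t) = -2a(t)α(t), g(t) = g0·a(t)·β(t)², h(t) = h0·a(t)·β(t)². Let G : ℝ → ℝ be twice differentiable with G''(ξ) = g0·G(ξ) + 2h0·G(ξ)³ for all ξ. Define θ(x,t) = α(t)x² + β(t)x + γ(t) and ξ(x,t) = β(t)x + 2γ(t). Then ψ(x,t) = exp(i·θ(x,t))·G(ξ(x,t)) and φ(x,t) = exp(-i·θ(x,t))·G(ξ(x,t)) satisfy the coupled NLS system with variable coefficients: i ψ_t = -a(t) ψ_xx + b(t)x²ψ - i c(t) x ψ_x - i d(t) ψ + g(t) ψ + h(t)(|ψ|²+|φ|²)ψ and i φ_t = a(t) φ_xx - b(t)x²φ - i c(t) x φ_x - i d(t) φ -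 g(t) φ - h(t)(|ψ|²+|φ|²)φ. -/
/-- Partial derivative in the first (space) variable. -/
noncomputable def pderivX (f : ℝ → ℝ → ℂ) (x t : ℝ) : ℂ :=
  deriv (fun x' => f x' t) x

/-- Second partial derivative in the first (space) variable. -/
noncomputable def pderivXX (f : ℝ → ℝ → ℂ) (x t : ℝ) : ℂ :=
  iteratedDeriv 2 (fun x' => f x' t) x

/-- Partial derivative in the second (time) variable. -/
noncomputable def pderivT (f : ℝ → ℝ → ℂ) (x t : ℝ) : ℂ :=
  deriv (fun t' => f x t') t

/-- The coupled NLS system with variable coefficients. -/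
def CNLS (a b c d g h : ℝ → ℝ) (ψ φ : ℝ → ℝ → ℂ) : Prop :=
  ∀ x t : ℝ,
    (Complex.I * pderivT ψ x t =
      -(a t : ℂ) * pderivXX ψ x t + (b t : ℂ) * (x : ℂ) ^ 2 * ψ x t
        - Complex.I * (c t : ℂ) * (x : ℂ) * pderivX ψ x t
        - Complex.I * (d t : ℂ) * ψ x t + (g t : ℂ) * ψ x t
        + (h t : ℂ) * ((‖ψ x t‖ ^ 2 + ‖φ x t‖ ^ 2 : ℝ) : ℂ) * ψ x t)
    ∧ (Complex.I * pderivT φ x t =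
      (a t : ℂ) * pderivXX φ x t - (b t : ℂ) * (x : ℂ) ^ 2 * φ x t
        - Complex.I * (c t : ℂ) * (x : ℂ) * pderivX φ x t
        - Complex.I * (d t : ℂ) * φ x t - (g t : ℂ) * φ x t
        - (h t : ℂ) * ((‖ψ x t‖ ^ 2 + ‖φ x t‖ ^ 2 : ℝ) : ℂ) * φ x t)

open Complex

private lemma hd_theta (A B C x : ℝ) :
    HasDerivAt (fun x' : ℝ => A * x' ^ 2 + B * x' + C) (2 * A * x + B) x := by
  have h := (((hasDerivAt_pow 2 x).const_mul A).add ((hasDerivAt_id x).const_mul B)).add_const C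
  refine h.congr_deriv ?_; push_cast; ring

private lemma hd_xi (B C x : ℝ) :
    HasDerivAt (fun x' : ℝ => B * x' + 2 * C) B x := by
  have h := ((hasDerivAt_id x).const_mul B).add_const (2 * C)
  refine h.congr_deriv ?_; ring

private lemma hd_lin (A B x : ℝ) :
    HasDerivAt (fun x' : ℝ => 2 * A * x' + B) (2 * A) x := by
  have h := ((hasDerivAt_id x).const_mul (2 * A)).add_const B
  refine h.congr_deriv ?_; ring

private lemma hd_fx (e : ℂ) (A B C : ℝ) (G : ℝ → ℝ) (hG : Differentiable ℝ G) (x : ℝ) :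
    HasDerivAt (fun x' : ℝ =>
        Complex.exp (e * ((A * x' ^ 2 + B * x' + C : ℝ) : ℂ)) * ((G (B * x' + 2 * C) : ℝ) : ℂ))
      (Complex.exp (e * ((A * x ^ 2 + B * x + C : ℝ) : ℂ)) *
        (e * ((2 * A * x + B : ℝ) : ℂ) * ((G (B * x + 2 * C) : ℝ) : ℂ)
          + ((B : ℝ) : ℂ) * ((deriv G (B * x + 2 * C) : ℝ) : ℂ))) x := by
  have h1 : HasDerivAt (fun x' : ℝ => Complex.exp (e * ((A * x' ^ 2 + B * x' + C : ℝ) : ℂ)))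
      (Complex.exp (e * ((A * x ^ 2 + B * x + C : ℝ) : ℂ)) * (e * ((2 * A * x + B : ℝ) : ℂ))) x :=
    (((hd_theta A B C x).ofReal_comp).const_mul e).cexp
  have h2 : HasDerivAt (fun x' : ℝ => ((G (B * x' + 2 * C) : ℝ) : ℂ))
      ((deriv G (B * x + 2 * C) * B : ℝ) : ℂ) x := by
    have := ((hG (B * x + 2 * C)).hasDerivAt.comp x (hd_xi B C x))
    exact this.ofReal_comp
  have h := h1.mul h2
  refine h.congr_deriv ?_
  push_cast; ring

private lemma hd_fxx (e : ℂ) (A B C : ℝ) (G : ℝ → ℝ) (hG : Differentiable ℝ G)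
    (hG2 : Differentiable ℝ (deriv G)) (x : ℝ) :
    HasDerivAt (fun x' : ℝ =>
        Complex.exp (e * ((A * x' ^ 2 + B * x' + C : ℝ) : ℂ)) *
          (e * ((2 * A * x' + B : ℝ) : ℂ) * ((G (B * x' + 2 * C) : ℝ) : ℂ)
            + ((B : ℝ) : ℂ) * ((deriv G (B * x' + 2 * C) : ℝ) : ℂ)))
      (Complex.exp (e * ((A * x ^ 2 + B * x + C : ℝ) : ℂ)) *
        (e * ((2 * A * x + B : ℝ) : ℂ) *
            (e * ((2 * A * x + B : ℝ) : ℂ) * ((G (B * x + 2 * C) : ℝ) : ℂ)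
              + ((B : ℝ) : ℂ) * ((deriv G (B * x + 2 * C) : ℝ) : ℂ))
          + (e * ((2 * A : ℝ) : ℂ) * ((G (B * x + 2 * C) : ℝ) : ℂ)
            + e * ((2 * A * x + B : ℝ) : ℂ) * ((B : ℝ) : ℂ) * ((deriv G (B * x + 2 * C) : ℝ) : ℂ)
            + ((B : ℝ) : ℂ) * ((B : ℝ) : ℂ) * ((deriv (deriv G) (B * x + 2 * C) : ℝ) : ℂ)))) x := by
  have h1 : HasDerivAt (fun x' : ℝ => Complex.exp (e * ((A * x' ^ 2 + B * x' + C : ℝ) : ℂ)))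
      (Complex.exp (e * ((A * x ^ 2 + B * x + C : ℝ) : ℂ)) * (e * ((2 * A * x + B : ℝ) : ℂ))) x :=
    (((hd_theta A B C x).ofReal_comp).const_mul e).cexp
  have hGc : HasDerivAt (fun x' : ℝ => ((G (B * x' + 2 * C) : ℝ) : ℂ))
      ((deriv G (B * x + 2 * C) * B : ℝ) : ℂ) x :=
    ((hG (B * x + 2 * C)).hasDerivAt.comp x (hd_xi B C x)).ofReal_comp
  have hGc2 : HasDerivAt (fun x' : ℝ => ((deriv G (B * x' + 2 * C) : ℝ) : ℂ))
      ((deriv (deriv G) (B * x + 2 * C) * B : ℝ) : ℂ) x :=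
    (HasDerivAt.comp (h₂ := deriv G) x (hG2 (B * x + 2 * C)).hasDerivAt (hd_xi B C x)).ofReal_comp
  have hlin : HasDerivAt (fun x' : ℝ => e * ((2 * A * x' + B : ℝ) : ℂ)) (e * ((2 * A : ℝ) : ℂ)) x :=
    ((hd_lin A B x).ofReal_comp).const_mul e
  have h2 := (hlin.mul hGc).add (hGc2.const_mul ((B : ℝ) : ℂ))
  have h := h1.mul h2
  refine h.congr_deriv ?_
  simp only [Pi.add_apply, Pi.mul_apply]; push_cast; ring

private lemma hd_ft (e : ℂ) (α β γ : ℝ → ℝ) (hα : Differentiable ℝ α)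
    (hβ : Differentiable ℝ β) (hγ : Differentiable ℝ γ)
    (G : ℝ → ℝ) (hG : Differentiable ℝ G) (x t : ℝ) :
    HasDerivAt (fun t' : ℝ =>
        Complex.exp (e * ((α t' * x ^ 2 + β t' * x + γ t' : ℝ) : ℂ)) *
          ((G (β t' * x + 2 * γ t') : ℝ) : ℂ))
      (Complex.exp (e * ((α t * x ^ 2 + β t * x + γ t : ℝ) : ℂ)) *
        (e * ((deriv α t * x ^ 2 + deriv β t * x + deriv γ t : ℝ) : ℂ) *
            ((G (β t * x + 2 * γ t) : ℝ) : ℂ)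
          + ((deriv β t * x + 2 * deriv γ t : ℝ) : ℂ) *
            ((deriv G (β t * x + 2 * γ t) : ℝ) : ℂ))) t := by
  have hθt : HasDerivAt (fun t' : ℝ => α t' * x ^ 2 + β t' * x + γ t')
      (deriv α t * x ^ 2 + deriv β t * x + deriv γ t) t :=
    (((hα t).hasDerivAt.mul_const (x ^ 2)).add ((hβ t).hasDerivAt.mul_const x)).add
      (hγ t).hasDerivAt
  have hξt : HasDerivAt (fun t' : ℝ => β t' * x + 2 * γ t')
      (deriv β t * x + 2 * deriv γ t) t :=
    ((hβ t).hasDerivAt.mul_const x).add ((hγ t).hasDerivAt.const_mul 2)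
  have h1 : HasDerivAt (fun t' : ℝ => Complex.exp (e * ((α t' * x ^ 2 + β t' * x + γ t' : ℝ) : ℂ)))
      (Complex.exp (e * ((α t * x ^ 2 + β t * x + γ t : ℝ) : ℂ)) *
        (e * ((deriv α t * x ^ 2 + deriv β t * x + deriv γ t : ℝ) : ℂ))) t :=
    ((hθt.ofReal_comp).const_mul e).cexp
  have h2 : HasDerivAt (fun t' : ℝ => ((G (β t' * x + 2 * γ t') : ℝ) : ℂ))
      ((deriv G (β t * x + 2 * γ t) * (deriv β t * x + 2 * deriv γ t) : ℝ) : ℂ) t :=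
    ((hG (β t * x + 2 * γ t)).hasDerivAt.comp t hξt).ofReal_comp
  have h := h1.mul h2
  refine h.congr_deriv ?_
  push_cast; ring


private lemma norm_sq_aux (e : ℂ) (he : e = Complex.I ∨ e = -Complex.I) (r s : ℝ) :
    ‖Complex.exp (e * (r : ℂ)) * ((s : ℝ) : ℂ)‖ ^ 2 = s ^ 2 := by
  rcases he with h | h <;> subst h <;> simp [Complex.norm_exp, sq_abs]

/-- Traveling-wave reduction of Section 2 of the paper: the ansatz
`ψ = e^{iθ} G(ξ)`, `φ = e^{-iθ} G(ξ)` with `θ = α x² + β x + γ`, `ξ = β x + 2γ`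
solves the variable-coefficient coupled NLS system whenever `G'' = g0 G + 2 h0 G³`
and the Riccati system holds. -/
theorem cnls_traveling_wave_reduction
    (a b c d g h : ℝ → ℝ) (g0 h0 : ℝ) (hg0 : g0 ≠ 0) (hh0 : h0 ≠ 0)
    (α β γ : ℝ → ℝ)
    (hαdiff : Differentiable ℝ α) (hβdiff : Differentiable ℝ β)
    (hγdiff : Differentiable ℝ γ)
    (hRic1 : ∀ t, deriv α t + b t + 2 * c t * α t + 4 * a t * (α t) ^ 2 = 0)
    (hRic2 : ∀ t, deriv β t + (c t + 4 * a t * α t) * β t = 0)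
    (hRic3 : ∀ t, deriv γ t + a t * (β t) ^ 2 = 0)
    (hd : ∀ t, d t = -2 * a t * α t)
    (hg : ∀ t, g t = g0 * a t * (β t) ^ 2)
    (hh : ∀ t, h t = h0 * a t * (β t) ^ 2)
    (G : ℝ → ℝ)
    (hGdiff : Differentiable ℝ G) (hGdiff2 : Differentiable ℝ (deriv G))
    (hG : ∀ ξ, deriv (deriv G) ξ = g0 * G ξ + 2 * h0 * (G ξ) ^ 3)
    (θ : ℝ → ℝ → ℝ) (hθ : ∀ x t, θ x t = α t * x ^ 2 + β t * x + γ t)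
    (ξ : ℝ → ℝ → ℝ) (hξ : ∀ x t, ξ x t = β t * x + 2 * γ t) :
    CNLS a b c d g h
      (fun x t => Complex.exp (Complex.I * (θ x t : ℂ)) * ((G (ξ x t) : ℝ) : ℂ))
      (fun x t => Complex.exp (-(Complex.I * (θ x t : ℂ))) * ((G (ξ x t) : ℝ) : ℂ)) := by
  intro x t
  have hIneg : ∀ z : ℂ, -(Complex.I * z) = -Complex.I * z := fun z => (neg_mul _ _).symm
  simp only [pderivX, pderivXX, pderivT, hθ, hξ, iteratedDeriv_succ, iteratedDeriv_one, iteratedDeriv_zero,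
    hIneg]
  -- first-derivative-in-x values as functions
  have hDx : ∀ e : ℂ,
      deriv (fun x' : ℝ => Complex.exp (e * ((α t * x' ^ 2 + β t * x' + γ t : ℝ) : ℂ)) *
          ((G (β t * x' + 2 * γ t) : ℝ) : ℂ))
      = fun x' : ℝ => Complex.exp (e * ((α t * x' ^ 2 + β t * x' + γ t : ℝ) : ℂ)) *
          (e * ((2 * α t * x' + β t : ℝ) : ℂ) * ((G (β t * x' + 2 * γ t) : ℝ) : ℂ)
            + ((β t : ℝ) : ℂ) * ((deriv G (β t * x' + 2 * γ t) : ℝ) : ℂ)) :=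
    fun e => funext fun y => (hd_fx e (α t) (β t) (γ t) G hGdiff y).deriv
  rw [hDx Complex.I, hDx (-Complex.I)]
  beta_reduce
  rw [(hd_fxx Complex.I (α t) (β t) (γ t) G hGdiff hGdiff2 x).deriv,
    (hd_fxx (-Complex.I) (α t) (β t) (γ t) G hGdiff hGdiff2 x).deriv,
    (hd_ft Complex.I α β γ hαdiff hβdiff hγdiff G hGdiff x t).deriv,
    (hd_ft (-Complex.I) α β γ hαdiff hβdiff hγdiff G hGdiff x t).deriv,
    norm_sq_aux Complex.I (Or.inl rfl), norm_sq_aux (-Complex.I) (Or.inr rfl)]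
  have hα' : deriv α t = -(b t) - 2 * c t * α t - 4 * a t * (α t) ^ 2 := by
    linarith [hRic1 t]
  have hβ' : deriv β t = -((c t + 4 * a t * α t) * β t) := by linarith [hRic2 t]
  have hγ' : deriv γ t = -(a t * (β t) ^ 2) := by linarith [hRic3 t]
  rw [hα', hβ', hγ', hd t, hg t, hh t, hG (β t * x + 2 * γ t)]
  constructor
  · linear_combination (norm := (push_cast; ring1))
      (-(b t : ℂ) * (x : ℂ) ^ 2 * ((G (β t * x + 2 * γ t) : ℝ) : ℂ) *
        Complex.exp (Complex.I * ((α t * x ^ 2 + β t * x + γ t : ℝ) : ℂ))) * Complex.I_sq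
  · linear_combination (norm := (push_cast; ring1))
      ((b t : ℂ) * (x : ℂ) ^ 2 * ((G (β t * x + 2 * γ t) : ℝ) : ℂ) *
        Complex.exp (-Complex.I * ((α t * x ^ 2 + β t * x + γ t : ℝ) : ℂ))) * Complex.I_sq
end

section
/- Let a, b, c : ℝ → ℝ be given coefficient functions, let g0 > 0 and h0 < 0 be real constants, ξ0 ∈ ℝ, and let α, β, γ : ℝ → ℝ be differentiable functions satisfying α'(t) + b(t) + 2c(t)α(t) + 4a(t)α(t)² = 0, β'(t) + (c(t) + 4a(t)α(t))β(t) = 0, γ'(t) + a(t)β(t)² = 0. Suppose d(t) = -2a(t)α(t), g(t) = g0·a(t)·β(t)², h(t) = h0·a(t)·β(t)². Define θ(x,t) = α(t)x² + β(t)x + γ(t). Then ψ(x,t) = √(-g0/h0)·sech(√g0·(β(t)x + 2γ(t) - ξ0))·exp(i·θ(x,t)) and φ(x,t) = √(-g0/h0)·sech(√g0·(β(t)x + 2γ(t) - ξ0))·exp(-i·θ(x,t)) satisfy the coupled NLS system with variable coefficients: i ψ_t = -a(t) ψ_xx + b(t)x²ψ - i c(t) x ψ_x - i d(t) ψ + g(t)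 ψ + h(t)(|ψ|²+|φ|²)ψ and i φ_t = a(t) φ_xx - b(t)x²φ - i c(t) x φ_x - i d(t) φ - g(t) φ - h(t)(|ψ|²+|φ|²)φ. -/
lemma congr_d {𝕜 : Type*} [NontriviallyNormedField 𝕜] {F : Type*} [NormedAddCommGroup F]
    [NormedSpace 𝕜 F] {f : 𝕜 → F} {v v' : F} {x : 𝕜}
    (h : HasDerivAt f v x) (e : v = v') : HasDerivAt f v' x := e ▸ h

lemma hasDerivAt_mul_cexp {ρ ϑ : ℝ → ℝ} {ρ' ϑ' : ℝ} {x : ℝ} (e : ℂ)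
    (hρ : HasDerivAt ρ ρ' x) (hϑ : HasDerivAt ϑ ϑ' x) :
    HasDerivAt (fun y => ((ρ y : ℝ) : ℂ) * Complex.exp (e * ((ϑ y : ℝ) : ℂ)))
      ((ρ' : ℂ) * Complex.exp (e * ((ϑ x : ℝ) : ℂ))
        + ((ρ x : ℝ) : ℂ) * (Complex.exp (e * ((ϑ x : ℝ) : ℂ)) * (e * (ϑ' : ℂ)))) x :=
  hρ.ofReal_comp.mul ((hϑ.ofReal_comp.const_mul e).cexp)

lemma hasDerivAt_mul_cexp_mul {ρ ϑ τ : ℝ → ℝ} {ρ' ϑ' τ' : ℝ} {x : ℝ} (e : ℂ)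
    (hρ : HasDerivAt ρ ρ' x) (hϑ : HasDerivAt ϑ ϑ' x) (hτ : HasDerivAt τ τ' x) :
    HasDerivAt (fun y => ((ρ y : ℝ) : ℂ) * (Complex.exp (e * ((ϑ y : ℝ) : ℂ)) * (e * ((τ y : ℝ) : ℂ))))
      ((ρ' : ℂ) * (Complex.exp (e * ((ϑ x : ℝ) : ℂ)) * (e * ((τ x : ℝ) : ℂ)))
        + ((ρ x : ℝ) : ℂ) * (Complex.exp (e * ((ϑ x : ℝ) : ℂ))
            * (e * e * (ϑ' : ℂ) * ((τ x : ℝ) : ℂ) + e * (τ' : ℂ)))) x := by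
  refine congr_d (hρ.ofReal_comp.mul (((hϑ.ofReal_comp.const_mul e).cexp).mul
    (hτ.ofReal_comp.const_mul e))) ?_
  ring

lemma norm_sq_cexp (A θv : ℝ) :
    ‖((A : ℝ) : ℂ) * Complex.exp (Complex.I * (θv : ℂ))‖ ^ 2 = A ^ 2 := by
  simp [Complex.norm_exp, Complex.mul_re, sq_abs]

lemma norm_sq_cexp_neg (A θv : ℝ) :
    ‖((A : ℝ) : ℂ) * Complex.exp (-(Complex.I * (θv : ℂ)))‖ ^ 2 = A ^ 2 := by
  simp [Complex.norm_exp, Complex.mul_re, sq_abs]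

lemma iteratedDeriv_two {f : ℝ → ℂ} : iteratedDeriv 2 f = deriv (deriv f) := by
  rw [show (2:ℕ) = 1 + 1 from rfl, iteratedDeriv_succ, iteratedDeriv_one]


/-- The bell-shaped (bright soliton) solutions of the paper solve the
variable-coefficient coupled NLS system. -/
theorem bright_soliton_solutions
    (a b c d g h : ℝ → ℝ) (g0 h0 ξ0 : ℝ) (hg0 : 0 < g0) (hh0 : h0 < 0)
    (α β γ : ℝ → ℝ)
    (hαdiff : Differentiable ℝ α) (hβdiff : Differentiable ℝ β)
    (hγdiff : Differentiable ℝ γ)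
    (hRic1 : ∀ t, deriv α t + b t + 2 * c t * α t + 4 * a t * (α t) ^ 2 = 0)
    (hRic2 : ∀ t, deriv β t + (c t + 4 * a t * α t) * β t = 0)
    (hRic3 : ∀ t, deriv γ t + a t * (β t) ^ 2 = 0)
    (hd : ∀ t, d t = -2 * a t * α t)
    (hg : ∀ t, g t = g0 * a t * (β t) ^ 2)
    (hh : ∀ t, h t = h0 * a t * (β t) ^ 2)
    (θ : ℝ → ℝ → ℝ) (hθ : ∀ x t, θ x t = α t * x ^ 2 + β t * x + γ t) :
    CNLS a b c d g h
      (fun x t => ((Real.sqrt (-g0 / h0)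
          * (1 / Real.cosh (Real.sqrt g0 * (β t * x + 2 * γ t - ξ0))) : ℝ) : ℂ)
        * Complex.exp (Complex.I * (θ x t : ℂ)))
      (fun x t => ((Real.sqrt (-g0 / h0)
          * (1 / Real.cosh (Real.sqrt g0 * (β t * x + 2 * γ t - ξ0))) : ℝ) : ℂ)
        * Complex.exp (-(Complex.I * (θ x t : ℂ)))) := by
  unfold CNLS
  intro x t
  simp only [hθ, one_div, pderivT, pderivX, pderivXX, iteratedDeriv_two]
  -- x-direction inner derivative
  have hwx : ∀ y : ℝ, HasDerivAt (fun y => Real.sqrt g0 * (β t * y + 2 * γ t - ξ0))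
      (Real.sqrt g0 * β t) y := by
    intro y
    have h : HasDerivAt (fun y : ℝ => β t * y + 2 * γ t - ξ0) (β t) y := by
      simpa using (((hasDerivAt_id y).const_mul (β t)).add_const (2 * γ t)).sub_const ξ0
    simpa using h.const_mul (Real.sqrt g0)
  have hsech : ∀ y : ℝ, HasDerivAt
      (fun y => Real.sqrt (-g0 / h0) * (Real.cosh (Real.sqrt g0 * (β t * y + 2 * γ t - ξ0)))⁻¹)
      (Real.sqrt (-g0 / h0) *
        (-(Real.sinh (Real.sqrt g0 * (β t * y + 2 * γ t - ξ0)) * (Real.sqrt g0 * β t)) /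
          Real.cosh (Real.sqrt g0 * (β t * y + 2 * γ t - ξ0)) ^ 2)) y := fun y =>
    (((Real.hasDerivAt_cosh _).comp y (hwx y)).inv (Real.cosh_pos _).ne').const_mul _
  have hτ : ∀ y : ℝ, HasDerivAt (fun y => α t * y ^ 2 + β t * y + γ t)
      (α t * (2 * y) + β t) y := by
    intro y
    refine congr_d ((((hasDerivAt_pow 2 y).const_mul (α t)).add
      ((hasDerivAt_id y).const_mul (β t))).add_const (γ t)) ?_
    push_cast; ring
  have hψx : ∀ y : ℝ, HasDerivAt
      (fun y => ((Real.sqrt (-g0 / h0) * (Real.cosh (Real.sqrt g0 * (β t * y + 2 * γ t - ξ0)))⁻¹ : ℝ) : ℂ)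
        * Complex.exp (Complex.I * ((α t * y ^ 2 + β t * y + γ t : ℝ) : ℂ)))
      (((Real.sqrt (-g0 / h0) *
          (-(Real.sinh (Real.sqrt g0 * (β t * y + 2 * γ t - ξ0)) * (Real.sqrt g0 * β t)) /
            Real.cosh (Real.sqrt g0 * (β t * y + 2 * γ t - ξ0)) ^ 2) : ℝ) : ℂ)
          * Complex.exp (Complex.I * ((α t * y ^ 2 + β t * y + γ t : ℝ) : ℂ))
        + ((Real.sqrt (-g0 / h0) * (Real.cosh (Real.sqrt g0 * (β t * y + 2 * γ t - ξ0)))⁻¹ : ℝ) : ℂ)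
          * (Complex.exp (Complex.I * ((α t * y ^ 2 + β t * y + γ t : ℝ) : ℂ))
              * (Complex.I * ((α t * (2 * y) + β t : ℝ) : ℂ)))) y := fun y =>
    hasDerivAt_mul_cexp Complex.I (hsech y) (hτ y)
  -- second x-derivative
  have hρ1 : HasDerivAt
      (fun y => Real.sqrt (-g0 / h0) *
        (-(Real.sinh (Real.sqrt g0 * (β t * y + 2 * γ t - ξ0)) * (Real.sqrt g0 * β t)) /
          Real.cosh (Real.sqrt g0 * (β t * y + 2 * γ t - ξ0)) ^ 2))
      (Real.sqrt (-g0 / h0) * ((Real.sqrt g0 * β t) ^ 2 *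
        (Real.sinh (Real.sqrt g0 * (β t * x + 2 * γ t - ξ0)) ^ 2 * 2
          - Real.cosh (Real.sqrt g0 * (β t * x + 2 * γ t - ξ0)) ^ 2)
        / Real.cosh (Real.sqrt g0 * (β t * x + 2 * γ t - ξ0)) ^ 3)) x := by
    have hne : Real.cosh (Real.sqrt g0 * (β t * x + 2 * γ t - ξ0)) ≠ 0 :=
      (Real.cosh_pos _).ne'
    refine congr_d (((((Real.hasDerivAt_sinh _).comp x (hwx x)).mul_const
      (Real.sqrt g0 * β t)).neg.div
      (((Real.hasDerivAt_cosh _).comp x (hwx x)).pow 2)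
      (pow_ne_zero 2 hne)) |>.const_mul (Real.sqrt (-g0 / h0))) ?_
    simp only [Function.comp_apply, Pi.pow_apply, Pi.neg_apply, Pi.mul_apply]
    field_simp
    ring
  have hlin : HasDerivAt (fun y : ℝ => α t * (2 * y) + β t) (α t * 2) x := by
    refine congr_d ((((hasDerivAt_id x).const_mul 2).const_mul (α t)).add_const (β t)) ?_
    ring
  have hDfun := (hasDerivAt_mul_cexp Complex.I hρ1 (hτ x)).add
    (hasDerivAt_mul_cexp_mul Complex.I (hsech x) (hτ x) hlin)
  simp only [Pi.add_def] at hDfun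
  have EXX : deriv (fun y => ((Real.sqrt (-g0 / h0) * (Real.cosh (Real.sqrt g0 * (β t * y + 2 * γ t - ξ0)))⁻¹ : ℝ) : ℂ)
        * Complex.exp (Complex.I * ((α t * y ^ 2 + β t * y + γ t : ℝ) : ℂ))) =
      fun y => (((Real.sqrt (-g0 / h0) *
          (-(Real.sinh (Real.sqrt g0 * (β t * y + 2 * γ t - ξ0)) * (Real.sqrt g0 * β t)) /
            Real.cosh (Real.sqrt g0 * (β t * y + 2 * γ t - ξ0)) ^ 2) : ℝ) : ℂ)
          * Complex.exp (Complex.I * ((α t * y ^ 2 + β t * y + γ t : ℝ) : ℂ))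
        + ((Real.sqrt (-g0 / h0) * (Real.cosh (Real.sqrt g0 * (β t * y + 2 * γ t - ξ0)))⁻¹ : ℝ) : ℂ)
          * (Complex.exp (Complex.I * ((α t * y ^ 2 + β t * y + γ t : ℝ) : ℂ))
              * (Complex.I * ((α t * (2 * y) + β t : ℝ) : ℂ)))) :=
    funext fun y => (hψx y).deriv
  -- time direction
  have hwt : HasDerivAt (fun t' => Real.sqrt g0 * (β t' * x + 2 * γ t' - ξ0))
      (Real.sqrt g0 * (deriv β t * x + 2 * deriv γ t)) t :=
    (((((hβdiff t).hasDerivAt.mul_const x).add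
      (((hγdiff t).hasDerivAt).const_mul 2)).sub_const ξ0).const_mul (Real.sqrt g0))
  have hFt : HasDerivAt
      (fun t' => Real.sqrt (-g0 / h0) * (Real.cosh (Real.sqrt g0 * (β t' * x + 2 * γ t' - ξ0)))⁻¹)
      (Real.sqrt (-g0 / h0) *
        (-(Real.sinh (Real.sqrt g0 * (β t * x + 2 * γ t - ξ0)) *
            (Real.sqrt g0 * (deriv β t * x + 2 * deriv γ t))) /
          Real.cosh (Real.sqrt g0 * (β t * x + 2 * γ t - ξ0)) ^ 2)) t :=
    (((Real.hasDerivAt_cosh _).comp t hwt).inv (Real.cosh_pos _).ne').const_mul _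
  have hθt : HasDerivAt (fun t' => α t' * x ^ 2 + β t' * x + γ t')
      (deriv α t * x ^ 2 + deriv β t * x + deriv γ t) t :=
    (((hαdiff t).hasDerivAt.mul_const (x ^ 2)).add
      ((hβdiff t).hasDerivAt.mul_const x)).add ((hγdiff t).hasDerivAt)
  have hψt := hasDerivAt_mul_cexp Complex.I hFt hθt
  -- φ derivatives
  have hφx := fun y : ℝ => hasDerivAt_mul_cexp (-Complex.I) (hsech y) (hτ y)
  simp only [neg_mul] at hφx
  have EXXφ := funext fun y : ℝ => (hφx y).deriv
  have hDfunφ := (hasDerivAt_mul_cexp (-Complex.I) hρ1 (hτ x)).add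
    (hasDerivAt_mul_cexp_mul (-Complex.I) (hsech x) (hτ x) hlin)
  simp only [neg_mul, Pi.add_def] at hDfunφ
  have hφt := hasDerivAt_mul_cexp (-Complex.I) hFt hθt
  simp only [neg_mul] at hφt
  -- algebraic facts
  have Rda : ((deriv α t : ℝ) : ℂ) = -(((b t : ℝ):ℂ) + 2 * ((c t : ℝ):ℂ) * ((α t : ℝ):ℂ)
      + 4 * ((a t : ℝ):ℂ) * ((α t : ℝ):ℂ) ^ 2) := by
    rw [show deriv α t = -(b t + 2 * c t * α t + 4 * a t * α t ^ 2) from by linarith [hRic1 t]]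
    push_cast; ring
  have Rdb : ((deriv β t : ℝ) : ℂ) = -((((c t : ℝ):ℂ) + 4 * ((a t : ℝ):ℂ) * ((α t : ℝ):ℂ)) * ((β t : ℝ):ℂ)) := by
    rw [show deriv β t = -((c t + 4 * a t * α t) * β t) from by linarith [hRic2 t]]
    push_cast; ring
  have Rdg : ((deriv γ t : ℝ) : ℂ) = -(((a t : ℝ):ℂ) * ((β t : ℝ):ℂ) ^ 2) := by
    rw [show deriv γ t = -(a t * β t ^ 2) from by linarith [hRic3 t]]
    push_cast; ring
  have Hs2 : ((Real.sqrt g0 : ℝ) : ℂ) ^ 2 = ((g0 : ℝ) : ℂ) := by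
    exact_mod_cast congrArg (fun r : ℝ => (r : ℂ)) (Real.sq_sqrt hg0.le)
  have HA2 : ((h0 : ℝ) : ℂ) * ((Real.sqrt (-g0 / h0) : ℝ) : ℂ) ^ 2 = -((g0 : ℝ) : ℂ) := by
    have h1 : Real.sqrt (-g0 / h0) ^ 2 = -g0 / h0 :=
      Real.sq_sqrt (le_of_lt (div_pos_of_neg_of_neg (by linarith) hh0))
    have h2 : h0 * Real.sqrt (-g0 / h0) ^ 2 = -g0 := by
      have h0ne : h0 ≠ 0 := ne_of_lt hh0
      rw [h1]; field_simp
    exact_mod_cast congrArg (fun r : ℝ => (r : ℂ)) h2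
  have HSC : Complex.sinh (((Real.sqrt g0 : ℝ):ℂ) * (((β t : ℝ):ℂ) * ((x:ℝ):ℂ) + 2 * ((γ t : ℝ):ℂ) - ((ξ0:ℝ):ℂ))) ^ 2
      = Complex.cosh (((Real.sqrt g0 : ℝ):ℂ) * (((β t : ℝ):ℂ) * ((x:ℝ):ℂ) + 2 * ((γ t : ℝ):ℂ) - ((ξ0:ℝ):ℂ))) ^ 2 - 1 :=
    Complex.sinh_sq _
  have HCne : Complex.cosh (((Real.sqrt g0 : ℝ):ℂ) * (((β t : ℝ):ℂ) * ((x:ℝ):ℂ) + 2 * ((γ t : ℝ):ℂ) - ((ξ0:ℝ):ℂ))) ≠ 0 := by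
    have hz : (((Real.sqrt g0 : ℝ):ℂ) * (((β t : ℝ):ℂ) * ((x:ℝ):ℂ) + 2 * ((γ t : ℝ):ℂ) - ((ξ0:ℝ):ℂ)))
        = ((Real.sqrt g0 * (β t * x + 2 * γ t - ξ0) : ℝ) : ℂ) := by push_cast; ring
    rw [hz, ← Complex.ofReal_cosh]
    exact_mod_cast (Real.cosh_pos _).ne'
  have HCinv : Complex.cosh (((Real.sqrt g0 : ℝ):ℂ) * (((β t : ℝ):ℂ) * ((x:ℝ):ℂ) + 2 * ((γ t : ℝ):ℂ) - ((ξ0:ℝ):ℂ)))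
      * (Complex.cosh (((Real.sqrt g0 : ℝ):ℂ) * (((β t : ℝ):ℂ) * ((x:ℝ):ℂ) + 2 * ((γ t : ℝ):ℂ) - ((ξ0:ℝ):ℂ))))⁻¹ = 1 :=
    mul_inv_cancel₀ HCne
  have HI : Complex.I ^ 2 = -1 := Complex.I_sq
  constructor
  · rw [hψt.deriv, (hψx x).deriv, EXX, hDfun.deriv, norm_sq_cexp, norm_sq_cexp_neg]
    simp only [hd, hg, hh]
    push_cast
    rw [Rda, Rdb, Rdg]
    linear_combination ((-1) * (Real.sqrt (-g0 / h0) : ℂ) * Complex.cosh ((Real.sqrt g0 : ℂ) * ((β t : ℂ) * (x : ℂ) + 2 * (γ t : ℂ) - (ξ0 : ℂ))) ^ 2 * (Complex.cosh ((Real.sqrt g0 : ℂ) * ((β t : ℂ) * (x : ℂ) + 2 * (γ t : ℂ) - (ξ0 : ℂ))))⁻¹ ^ 3 * Complex.exp (Complex.I * ((α t : ℂ) * (x : ℂ) ^ 2 + (β t : ℂ) * (x : ℂ) + (γ t : ℂ))) * (β t : ℂ) ^ 2 * (a t : ℂ) + 2 * (Real.sqrt (-g0 / h0) : ℂ) * Complex.sinh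 ((Real.sqrt g0 : ℂ) * ((β t : ℂ) * (x : ℂ) + 2 * (γ t : ℂ) - (ξ0 : ℂ))) ^ 2 * (Complex.cosh ((Real.sqrt g0 : ℂ) * ((β t : ℂ) * (x : ℂ) + 2 * (γ t : ℂ) - (ξ0 : ℂ))))⁻¹ ^ 3 * Complex.exp (Complex.I * ((α t : ℂ) * (x : ℂ) ^ 2 + (β t : ℂ) * (x : ℂ) + (γ t : ℂ))) * (β t : ℂ) ^ 2 * (a t : ℂ)) * Hs2 + ((-2) * (Real.sqrt (-g0 / h0) : ℂ) * (Complex.cosh ((Real.sqrt g0 : ℂ) * ((β t : ℂ) * (x : ℂ) + 2 * (γ t : ℂ) - (ξ0 : ℂ))))⁻¹ ^ 3 * Complex.exp (Complex.I * ((α t : ℂ) * (x : ℂ) ^ 2 + (β t : ℂ) * (x : ℂ) + (γ t : ℂ))) * (β t : ℂ) ^ 2 * (a t : ℂ)) * HA2 + (2 * (Real.sqrt (-g0 / h0) : ℂ) * (Complex.cosh ((Real.sqrt g0 : ℂ) * ((β t : ℂ) * (x : ℂ) + 2 * (γ t : ℂ) - (ξ0 : ℂ))))⁻¹ ^ 3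 * Complex.exp (Complex.I * ((α t : ℂ) * (x : ℂ) ^ 2 + (β t : ℂ) * (x : ℂ) + (γ t : ℂ))) * (β t : ℂ) ^ 2 * (a t : ℂ) * (g0 : ℂ)) * HSC + ((-1) * (Real.sqrt (-g0 / h0) : ℂ) * (Complex.cosh ((Real.sqrt g0 : ℂ) * ((β t : ℂ) * (x : ℂ) + 2 * (γ t : ℂ) - (ξ0 : ℂ))))⁻¹ * Complex.exp (Complex.I * ((α t : ℂ) * (x : ℂ) ^ 2 + (β t : ℂ) * (x : ℂ) + (γ t : ℂ))) * (x : ℂ) ^ 2 * (b t : ℂ)) * HI + ((Real.sqrt (-g0 / h0) : ℂ) * (Complex.cosh ((Real.sqrt g0 : ℂ) * ((β t : ℂ) * (x : ℂ) + 2 * (γ t : ℂ) - (ξ0 : ℂ))))⁻¹ * Complex.exp (Complex.I * ((α t : ℂ) * (x : ℂ) ^ 2 + (β t : ℂ) * (x : ℂ) + (γ t : ℂ))) * (β t : ℂ) ^ 2 * (a t : ℂ) * (g0 : ℂ) + (Real.sqrt (-g0 / h0) : ℂ) * Complex.cosh ((Real.sqrt g0 : ℂ) * ((β t : ℂ) *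 (x : ℂ) + 2 * (γ t : ℂ) - (ξ0 : ℂ))) * (Complex.cosh ((Real.sqrt g0 : ℂ) * ((β t : ℂ) * (x : ℂ) + 2 * (γ t : ℂ) - (ξ0 : ℂ))))⁻¹ ^ 2 * Complex.exp (Complex.I * ((α t : ℂ) * (x : ℂ) ^ 2 + (β t : ℂ) * (x : ℂ) + (γ t : ℂ))) * (β t : ℂ) ^ 2 * (a t : ℂ) * (g0 : ℂ)) * HCinv
  · rw [hφt.deriv, (hφx x).deriv, EXXφ, hDfunφ.deriv, norm_sq_cexp, norm_sq_cexp_neg]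
    simp only [hd, hg, hh]
    push_cast
    rw [Rda, Rdb, Rdg]
    linear_combination ((Real.sqrt (-g0 / h0) : ℂ) * Complex.cosh ((Real.sqrt g0 : ℂ) * ((β t : ℂ) * (x : ℂ) + 2 * (γ t : ℂ) - (ξ0 : ℂ))) ^ 2 * (Complex.cosh ((Real.sqrt g0 : ℂ) * ((β t : ℂ) * (x : ℂ) + 2 * (γ t : ℂ) - (ξ0 : ℂ))))⁻¹ ^ 3 * Complex.exp (-(Complex.I * ((α t : ℂ) * (x : ℂ) ^ 2 + (β t : ℂ) * (x : ℂ) + (γ t : ℂ)))) * (β t : ℂ) ^ 2 * (a t : ℂ) + (-2) * (Real.sqrt (-g0 / h0) : ℂ) * Complex.sinh ((Real.sqrt g0 : ℂ) * ((β t : ℂ) * (x : ℂ) + 2 * (γ t : ℂ) - (ξ0 : ℂ))) ^ 2 * (Complex.cosh ((Real.sqrt g0 : ℂ) * ((β t : ℂ) * (x : ℂ) + 2 * (γ t : ℂ) - (ξ0 : ℂ))))⁻¹ ^ 3 * Complex.exp (-(Complex.I * ((α t : ℂ) * (x : ℂ) ^ 2 + (β t : ℂ) * (x : ℂ) + (γ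 t : ℂ)))) * (β t : ℂ) ^ 2 * (a t : ℂ)) * Hs2 + (2 * (Real.sqrt (-g0 / h0) : ℂ) * (Complex.cosh ((Real.sqrt g0 : ℂ) * ((β t : ℂ) * (x : ℂ) + 2 * (γ t : ℂ) - (ξ0 : ℂ))))⁻¹ ^ 3 * Complex.exp (-(Complex.I * ((α t : ℂ) * (x : ℂ) ^ 2 + (β t : ℂ) * (x : ℂ) + (γ t : ℂ)))) * (β t : ℂ) ^ 2 * (a t : ℂ)) * HA2 + ((-2) * (Real.sqrt (-g0 / h0) : ℂ) * (Complex.cosh ((Real.sqrt g0 : ℂ) * ((β t : ℂ) * (x : ℂ) + 2 * (γ t : ℂ) - (ξ0 : ℂ))))⁻¹ ^ 3 * Complex.exp (-(Complex.I * ((α t : ℂ) * (x : ℂ) ^ 2 + (β t : ℂ) * (x : ℂ) + (γ t : ℂ)))) * (β t : ℂ) ^ 2 * (a t : ℂ) * (g0 : ℂ)) * HSC + ((Real.sqrt (-g0 / h0) : ℂ) * (Complex.cosh ((Real.sqrt g0 : ℂ) * ((β t : ℂ) * (x : ℂ) + 2 * (γ t : ℂ) - (ξ0 : ℂ))))⁻¹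 * Complex.exp (-(Complex.I * ((α t : ℂ) * (x : ℂ) ^ 2 + (β t : ℂ) * (x : ℂ) + (γ t : ℂ)))) * (x : ℂ) ^ 2 * (b t : ℂ)) * HI + ((-1) * (Real.sqrt (-g0 / h0) : ℂ) * (Complex.cosh ((Real.sqrt g0 : ℂ) * ((β t : ℂ) * (x : ℂ) + 2 * (γ t : ℂ) - (ξ0 : ℂ))))⁻¹ * Complex.exp (-(Complex.I * ((α t : ℂ) * (x : ℂ) ^ 2 + (β t : ℂ) * (x : ℂ) + (γ t : ℂ)))) * (β t : ℂ) ^ 2 * (a t : ℂ) * (g0 : ℂ) + (-1) * (Real.sqrt (-g0 / h0) : ℂ) * Complex.cosh ((Real.sqrt g0 : ℂ) * ((β t : ℂ) * (x : ℂ) + 2 * (γ t : ℂ) - (ξ0 : ℂ))) * (Complex.cosh ((Real.sqrt g0 : ℂ) * ((β t : ℂ) * (x : ℂ) + 2 * (γ t : ℂ) - (ξ0 : ℂ))))⁻¹ ^ 2 * Complex.exp (-(Complex.I * ((α t : ℂ) * (x : ℂ) ^ 2 + (β t : ℂ) * (x : ℂ) + (γ t : ℂ)))) * (β t : ℂ)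 ^ 2 * (a t : ℂ) * (g0 : ℂ)) * HCinv
end

section
/- Let a, b, c : ℝ → ℝ be given coefficient functions, let g0 < 0 and h0 > 0 be real constants, ξ0 ∈ ℝ, and let α, β, γ : ℝ → ℝ be differentiable functions satisfying α'(t) + b(t) + 2c(t)α(t) + 4a(t)α(t)² = 0, β'(t) + (c(t) + 4a(t)α(t))β(t) = 0, γ'(t) + a(t)β(t)² = 0. Suppose d(t) = -2a(t)α(t), g(t) = g0·a(t)·β(t)², h(t) = h0·a(t)·β(t)². Define θ(x,t) = α(t)x² + β(t)x + γ(t). Then ψ(x,t) = √(-g0/(2h0))·tanh(√(-g0/2)·(β(t)x + 2γ(t) - ξ0))·exp(i·θ(x,t)) and φ(x,t) = √(-g0/(2h0))·tanh(√(-g0/2)·(β(t)x + 2γ(t) - ξ0))·exp(-i·θ(x,t)) satisfy the coupled NLS system with variable coefficients: i ψ_t = -a(t) ψ_xx + b(t)x²ψ - i c(t) x ψ_x - i d(t) ψ + g(t) ψ + h(t)(|ψ|²+|φ|²)ψ and i φ_t = a(t) φ_xx - b(t)x²φ - i c(t) x φ_x - i d(t) φ - g(t) φ - h(t)(|ψ|²+|φ|²)φ.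 -/
lemma hasDerivAt_tanh' (y : ℝ) : HasDerivAt Real.tanh (1 - Real.tanh y ^ 2) y := by
  have h := (Real.hasDerivAt_sinh y).div (Real.hasDerivAt_cosh y) (Real.cosh_pos y).ne'
  have hfun : (fun z => Real.sinh z / Real.cosh z) = Real.tanh := by
    funext z; rw [Real.tanh_eq_sinh_div_cosh]
  rw [show (Real.sinh / Real.cosh) = Real.tanh from hfun] at h
  refine h.congr_deriv ?_
  rw [Real.tanh_eq_sinh_div_cosh]
  have h1 := Real.cosh_sq_sub_sinh_sq y
  have h2 := (Real.cosh_pos y).ne'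
  field_simp

lemma HasDerivAt.tanh'' {f : ℝ → ℝ} {f' x : ℝ} (hf : HasDerivAt f f' x) :
    HasDerivAt (fun u => Real.tanh (f u)) ((1 - Real.tanh (f x) ^ 2) * f') x :=
  (hasDerivAt_tanh' (f x)).comp x hf

lemma aux_mul_cexp (ε : ℂ) {w : ℝ → ℂ} {v : ℝ → ℝ} {w' : ℂ} {v' x : ℝ}
    (hw : HasDerivAt w w' x) (hv : HasDerivAt v v' x) :
    HasDerivAt (fun y => w y * Complex.exp (ε * (v y : ℂ)))
      ((w' + w x * (ε * (v' : ℂ))) * Complex.exp (ε * ((v x : ℝ) : ℂ))) x := by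
  have h1 : HasDerivAt (fun y => ε * ((v y : ℝ) : ℂ)) (ε * (v' : ℂ)) x :=
    (hv.ofReal_comp).const_mul ε
  have h3 := hw.mul h1.cexp
  refine h3.congr_deriv ?_
  ring

set_option maxHeartbeats 1000000 in
/-- The kink-shaped (dark soliton) solutions of the paper solve the
variable-coefficient coupled NLS system. -/
theorem dark_soliton_solutions
    (a b c d g h : ℝ → ℝ) (g0 h0 ξ0 : ℝ) (hg0 : g0 < 0) (hh0 : 0 < h0)
    (α β γ : ℝ → ℝ)
    (hαdiff : Differentiable ℝ α) (hβdiff : Differentiable ℝ β)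
    (hγdiff : Differentiable ℝ γ)
    (hRic1 : ∀ t, deriv α t + b t + 2 * c t * α t + 4 * a t * (α t) ^ 2 = 0)
    (hRic2 : ∀ t, deriv β t + (c t + 4 * a t * α t) * β t = 0)
    (hRic3 : ∀ t, deriv γ t + a t * (β t) ^ 2 = 0)
    (hd : ∀ t, d t = -2 * a t * α t)
    (hg : ∀ t, g t = g0 * a t * (β t) ^ 2)
    (hh : ∀ t, h t = h0 * a t * (β t) ^ 2)
    (θ : ℝ → ℝ → ℝ) (hθ : ∀ x t, θ x t = α t * x ^ 2 + β t * x + γ t) :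
    CNLS a b c d g h
      (fun x t => ((Real.sqrt (-g0 / (2 * h0))
          * Real.tanh (Real.sqrt (-g0 / 2) * (β t * x + 2 * γ t - ξ0)) : ℝ) : ℂ)
        * Complex.exp (Complex.I * (θ x t : ℂ)))
      (fun x t => ((Real.sqrt (-g0 / (2 * h0))
          * Real.tanh (Real.sqrt (-g0 / 2) * (β t * x + 2 * γ t - ξ0)) : ℝ) : ℂ)
        * Complex.exp (-(Complex.I * (θ x t : ℂ)))) := by
  have hg0' : (0:ℝ) ≤ -g0 := by linarith
  have hK2 : (Real.sqrt (-g0 / 2)) ^ 2 = -g0 / 2 :=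
    Real.sq_sqrt (by linarith)
  have hA2 : (Real.sqrt (-g0 / (2 * h0))) ^ 2 = -g0 / (2 * h0) :=
    Real.sq_sqrt (div_nonneg hg0' (by linarith))
  set A := Real.sqrt (-g0 / (2 * h0)) with hAdef
  set K := Real.sqrt (-g0 / 2) with hKdef
  have hg0e : g0 = -(2 * K ^ 2) := by rw [hK2]; ring
  unfold CNLS pderivT pderivX pderivXX
  intro x t
  have i2 : ∀ f : ℝ → ℂ, iteratedDeriv 2 f = deriv (deriv f) := by
    intro f
    rw [show (2:ℕ) = 1 + 1 from rfl, iteratedDeriv_succ, iteratedDeriv_one]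
  simp only [hθ, ← neg_mul, i2]
  have hα' := (hαdiff t).hasDerivAt
  have hβ' := (hβdiff t).hasDerivAt
  have hγ' := (hγdiff t).hasDerivAt
  have hdα : deriv α t = -(b t) - 2 * c t * α t - 4 * a t * α t ^ 2 := by
    have := hRic1 t; linarith
  have hdβ : deriv β t = -((c t + 4 * a t * α t) * β t) := by
    have := hRic2 t; linarith
  have hdγ : deriv γ t = -(a t * β t ^ 2) := by
    have := hRic3 t; linarith
  -- space derivative (first)
  have hspace1 : ∀ (ε : ℂ) (x' : ℝ), HasDerivAt
      (fun u : ℝ => (((A * Real.tanh (K * (β t * u + 2 * γ t - ξ0)) : ℝ) : ℂ)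
          * Complex.exp (ε * ((α t * u ^ 2 + β t * u + γ t : ℝ) : ℂ))))
      (((((A * (K * β t) * (1 - Real.tanh (K * (β t * x' + 2 * γ t - ξ0)) ^ 2) : ℝ)) : ℂ)
          + (((A * Real.tanh (K * (β t * x' + 2 * γ t - ξ0)) : ℝ)) : ℂ)
            * (ε * (((2 * α t * x' + β t : ℝ)) : ℂ)))
        * Complex.exp (ε * (((α t * x' ^ 2 + β t * x' + γ t : ℝ)) : ℂ))) x' := by
    intro ε x'
    have hlin : HasDerivAt (fun u : ℝ => K * (β t * u + 2 * γ t - ξ0)) (K * β t) x' := by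
      simpa using ((((hasDerivAt_id' (x := x')).const_mul (β t)).add_const
        (2 * γ t)).sub_const ξ0).const_mul K
    have hw : HasDerivAt
        (fun u : ℝ => (((A * Real.tanh (K * (β t * u + 2 * γ t - ξ0)) : ℝ)) : ℂ))
        (((A * ((1 - Real.tanh (K * (β t * x' + 2 * γ t - ξ0)) ^ 2) * (K * β t)) : ℝ) : ℂ)) x' :=
      (hlin.tanh''.const_mul A).ofReal_comp
    have hv : HasDerivAt (fun u : ℝ => α t * u ^ 2 + β t * u + γ t)
        (2 * α t * x' + β t) x' := by
      have h1 := (((hasDerivAt_pow 2 x').const_mul (α t)).add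
        ((hasDerivAt_id' (x := x')).const_mul (β t))).add_const (γ t)
      refine h1.congr_deriv ?_
      push_cast; ring
    have h2 := aux_mul_cexp ε hw hv
    refine h2.congr_deriv ?_
    push_cast; ring
  have hsderiv : ∀ ε : ℂ, deriv
      (fun u : ℝ => (((A * Real.tanh (K * (β t * u + 2 * γ t - ξ0)) : ℝ) : ℂ)
          * Complex.exp (ε * ((α t * u ^ 2 + β t * u + γ t : ℝ) : ℂ))))
      = fun x' : ℝ =>
        (((((A * (K * β t) * (1 - Real.tanh (K * (β t * x' + 2 * γ t - ξ0)) ^ 2) : ℝ)) : ℂ)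
          + (((A * Real.tanh (K * (β t * x' + 2 * γ t - ξ0)) : ℝ)) : ℂ)
            * (ε * (((2 * α t * x' + β t : ℝ)) : ℂ)))
        * Complex.exp (ε * (((α t * x' ^ 2 + β t * x' + γ t : ℝ)) : ℂ))) :=
    fun ε => funext fun x' => (hspace1 ε x').deriv
  -- space derivative (second)
  have hspace2 : ∀ ε : ℂ, HasDerivAt
      (fun x' : ℝ =>
        (((((A * (K * β t) * (1 - Real.tanh (K * (β t * x' + 2 * γ t - ξ0)) ^ 2) : ℝ)) : ℂ)
          + (((A * Real.tanh (K * (β t * x' + 2 * γ t - ξ0)) : ℝ)) : ℂ)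
            * (ε * (((2 * α t * x' + β t : ℝ)) : ℂ)))
        * Complex.exp (ε * (((α t * x' ^ 2 + β t * x' + γ t : ℝ)) : ℂ))))
      ((((-2 * A * (K * β t) ^ 2 * Real.tanh (K * (β t * x + 2 * γ t - ξ0)) * (1 - Real.tanh (K * (β t * x + 2 * γ t - ξ0)) ^ 2) : ℝ) : ℂ) + ((A * (K * β t) * (1 - Real.tanh (K * (β t * x + 2 * γ t - ξ0)) ^ 2) : ℝ) : ℂ) * (ε * ((2 * α t * x + β t : ℝ) : ℂ)) + ((A * Real.tanh (K * (β t * x + 2 * γ t - ξ0)) : ℝ) : ℂ) * (ε * ((2 * α t : ℝ) : ℂ)) + (((A * (K * β t) * (1 - Real.tanh (K * (β t * x + 2 * γ t - ξ0)) ^ 2) : ℝ) : ℂ) + ((A * Real.tanh (K * (β t * x + 2 * γ t - ξ0)) : ℝ) : ℂ) * (ε * ((2 * α t * x + β t : ℝ) : ℂ))) * (ε * ((2 * α t * x + β t : ℝ) : ℂ))) * Complex.exp (ε * ((α t * x ^ 2 + β t * x + γ t : ℝ) : ℂ))) x := by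
    intro ε
    have hlin : HasDerivAt (fun u : ℝ => K * (β t * u + 2 * γ t - ξ0)) (K * β t) x := by
      simpa using ((((hasDerivAt_id' (x := x)).const_mul (β t)).add_const
        (2 * γ t)).sub_const ξ0).const_mul K
    have htanh := hlin.tanh''
    have hu1 : HasDerivAt
        (fun u : ℝ => A * (K * β t) * (1 - Real.tanh (K * (β t * u + 2 * γ t - ξ0)) ^ 2))
        (A * (K * β t) * -(2 * Real.tanh (K * (β t * x + 2 * γ t - ξ0)) ^ 1
          * ((1 - Real.tanh (K * (β t * x + 2 * γ t - ξ0)) ^ 2) * (K * β t)))) x :=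
      ((htanh.pow 2).const_sub 1).const_mul (A * (K * β t))
    have hw : HasDerivAt
        (fun u : ℝ => (((A * Real.tanh (K * (β t * u + 2 * γ t - ξ0)) : ℝ)) : ℂ))
        (((A * ((1 - Real.tanh (K * (β t * x + 2 * γ t - ξ0)) ^ 2) * (K * β t)) : ℝ) : ℂ)) x :=
      (htanh.const_mul A).ofReal_comp
    have hu3 : HasDerivAt (fun u : ℝ => 2 * α t * u + β t) (2 * α t) x := by
      simpa using ((hasDerivAt_id' (x := x)).const_mul (2 * α t)).add_const (β t)
    have hW := (hu1.ofReal_comp).add (hw.mul ((hu3.ofReal_comp).const_mul ε))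
    have hv : HasDerivAt (fun u : ℝ => α t * u ^ 2 + β t * u + γ t)
        (2 * α t * x + β t) x := by
      have h1 := (((hasDerivAt_pow 2 x).const_mul (α t)).add
        ((hasDerivAt_id' (x := x)).const_mul (β t))).add_const (γ t)
      refine h1.congr_deriv ?_
      push_cast; ring
    have h2 := aux_mul_cexp ε hW hv
    refine h2.congr_deriv ?_
    simp only [Pi.add_apply, Pi.mul_apply]
    push_cast; ring
  -- time derivative
  have htime : ∀ ε : ℂ, HasDerivAt
      (fun u : ℝ => (((A * Real.tanh (K * (β u * x + 2 * γ u - ξ0)) : ℝ) : ℂ)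
          * Complex.exp (ε * ((α u * x ^ 2 + β u * x + γ u : ℝ) : ℂ))))
      (((((A * (K * (deriv β t * x + 2 * deriv γ t))
            * (1 - Real.tanh (K * (β t * x + 2 * γ t - ξ0)) ^ 2) : ℝ)) : ℂ)
          + (((A * Real.tanh (K * (β t * x + 2 * γ t - ξ0)) : ℝ)) : ℂ)
            * (ε * (((deriv α t * x ^ 2 + deriv β t * x + deriv γ t : ℝ)) : ℂ)))
        * Complex.exp (ε * (((α t * x ^ 2 + β t * x + γ t : ℝ)) : ℂ))) t := by
    intro ε
    have hlin : HasDerivAt (fun u : ℝ => K * (β u * x + 2 * γ u - ξ0))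
        (K * (deriv β t * x + 2 * deriv γ t)) t :=
      (((hβ'.mul_const x).add (hγ'.const_mul 2)).sub_const ξ0).const_mul K
    have hw : HasDerivAt
        (fun u : ℝ => (((A * Real.tanh (K * (β u * x + 2 * γ u - ξ0)) : ℝ)) : ℂ))
        (((A * ((1 - Real.tanh (K * (β t * x + 2 * γ t - ξ0)) ^ 2)
          * (K * (deriv β t * x + 2 * deriv γ t))) : ℝ) : ℂ)) t :=
      (hlin.tanh''.const_mul A).ofReal_comp
    have hv : HasDerivAt (fun u : ℝ => α u * x ^ 2 + β u * x + γ u)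
        (deriv α t * x ^ 2 + deriv β t * x + deriv γ t) t :=
      ((hα'.mul_const (x ^ 2)).add (hβ'.mul_const x)).add hγ'
    have h2 := aux_mul_cexp ε hw hv
    refine h2.congr_deriv ?_
    push_cast; ring
  -- norms
  have hnorm : ∀ (ε : ℂ), ε.re = 0 → ∀ r s : ℝ,
      ‖((r : ℂ) * Complex.exp (ε * (s : ℂ)) : ℂ)‖ ^ 2 = r ^ 2 := by
    intro ε hε r s
    rw [norm_mul, Complex.norm_real, Complex.norm_exp]
    simp [Complex.mul_re, hε, Real.exp_zero, sq_abs, Real.norm_eq_abs]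
  have hre1 : Complex.I.re = 0 := Complex.I_re
  have hre2 : (-Complex.I).re = 0 := by simp
  have hrealprod : h t * ((A * Real.tanh (K * (β t * x + 2 * γ t - ξ0))) ^ 2 + (A * Real.tanh (K * (β t * x + 2 * γ t - ξ0))) ^ 2) = -g0 * a t * β t ^ 2 * Real.tanh (K * (β t * x + 2 * γ t - ξ0)) ^ 2 := by
    have e : (A * Real.tanh (K * (β t * x + 2 * γ t - ξ0))) ^ 2 = -g0 / (2 * h0) * Real.tanh (K * (β t * x + 2 * γ t - ξ0)) ^ 2 := by rw [mul_pow, hA2]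
    rw [hh t, e]
    field_simp
    ring
  have hpc : ((h t : ℝ) : ℂ) * ((((A * Real.tanh (K * (β t * x + 2 * γ t - ξ0))) ^ 2 + (A * Real.tanh (K * (β t * x + 2 * γ t - ξ0))) ^ 2 : ℝ)) : ℂ)
      = (((-g0 * a t * β t ^ 2 * Real.tanh (K * (β t * x + 2 * γ t - ξ0)) ^ 2 : ℝ)) : ℂ) := by
    rw [← Complex.ofReal_mul, hrealprod]
  refine ⟨?_, ?_⟩
  · rw [hsderiv Complex.I]
    beta_reduce
    rw [(hspace2 Complex.I).deriv, (htime Complex.I).deriv,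
      hnorm Complex.I hre1, hnorm (-Complex.I) hre2, hpc,
      hd t, hg t, hdα, hdβ, hdγ, hg0e]
    push_cast [-Complex.ofReal_tanh]
    ring_nf
    simp only [Complex.I_sq]
    ring_nf
  · rw [hsderiv (-Complex.I)]
    beta_reduce
    rw [(hspace2 (-Complex.I)).deriv, (htime (-Complex.I)).deriv,
      hnorm Complex.I hre1, hnorm (-Complex.I) hre2, hpc,
      hd t, hg t, hdα, hdβ, hdγ, hg0e]
    push_cast [-Complex.ofReal_tanh]
    ring_nf
    simp only [Complex.I_sq]
    ring_nf
end

section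
/- Let a, b, c : ℝ → ℝ be given coefficient functions, let g0, h0 be nonzero real constants with g0/h0 < 0, and let α, β, γ : ℝ → ℝ be differentiable functions satisfying α'(t) + b(t) + 2c(t)α(t) + 4a(t)α(t)² = 0, β'(t) + (c(t) + 4a(t)α(t))β(t) = 0, γ'(t) + a(t)β(t)² = 0. Suppose d(t) = -2a(t)α(t), g(t) = g0·a(t)·β(t)², h(t) = h0·a(t)·β(t)². Define θ(x,t) = α(t)x² + β(t)x + γ(t). Then the plane-wave functions ψ(x,t) = √(-g0/(2h0))·exp(i·θ(x,t)) and φ(x,t) = √(-g0/(2h0))·exp(-i·θ(x,t)) satisfy the coupled NLS system with variable coefficients: i ψ_t = -a(t) ψ_xx + b(t)x²ψ - i c(t) x ψ_x - i d(t) ψ + g(t) ψ + h(t)(|ψ|²+|φ|²)ψ and i φ_t = a(t) φ_xx - b(t)x²φ - i c(t) x φ_x - i d(t) φ - g(t) φ - h(t)(|ψ|²+|φ|²)φ. -/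
lemma hasDerivAt_A_exp (A ε : ℂ) {f : ℝ → ℝ} {f' : ℝ} {t : ℝ} (hf : HasDerivAt f f' t) :
    HasDerivAt (fun s => A * Complex.exp (ε * ((f s : ℝ) : ℂ)))
      (A * (ε * (f' : ℂ)) * Complex.exp (ε * ((f t : ℝ) : ℂ))) t := by
  have h2 := ((hf.ofReal_comp.const_mul ε).cexp).const_mul A
  exact h2.congr_deriv (by ring)

lemma hasDerivAt_quad (p q r x : ℝ) :
    HasDerivAt (fun x' : ℝ => p * x' ^ 2 + q * x' + r) (2 * p * x + q) x := by
  have := (((hasDerivAt_pow 2 x).const_mul p).add ((hasDerivAt_id x).const_mul q)).add_const r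
  exact this.congr_deriv (by norm_num; ring)

/-- The plane-wave solutions of the paper (Hamiltonian level `H0 = g0²/(8h0)`)
solve the variable-coefficient coupled NLS system. -/
theorem plane_wave_solutions
    (a b c d g h : ℝ → ℝ) (g0 h0 : ℝ) (hg0 : g0 ≠ 0) (hh0 : h0 ≠ 0)
    (hratio : g0 / h0 < 0)
    (α β γ : ℝ → ℝ)
    (hαdiff : Differentiable ℝ α) (hβdiff : Differentiable ℝ β)
    (hγdiff : Differentiable ℝ γ)
    (hRic1 : ∀ t, deriv α t + b t + 2 * c t * α t + 4 * a t * (α t) ^ 2 = 0)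
    (hRic2 : ∀ t, deriv β t + (c t + 4 * a t * α t) * β t = 0)
    (hRic3 : ∀ t, deriv γ t + a t * (β t) ^ 2 = 0)
    (hd : ∀ t, d t = -2 * a t * α t)
    (hg : ∀ t, g t = g0 * a t * (β t) ^ 2)
    (hh : ∀ t, h t = h0 * a t * (β t) ^ 2)
    (θ : ℝ → ℝ → ℝ) (hθ : ∀ x t, θ x t = α t * x ^ 2 + β t * x + γ t) :
    CNLS a b c d g h
      (fun x t => ((Real.sqrt (-g0 / (2 * h0)) : ℝ) : ℂ)
        * Complex.exp (Complex.I * (θ x t : ℂ)))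
      (fun x t => ((Real.sqrt (-g0 / (2 * h0)) : ℝ) : ℂ)
        * Complex.exp (-(Complex.I * (θ x t : ℂ)))) := by
  intro x t
  have hpos : (0:ℝ) < -g0 / (2 * h0) := by
    have hkey : -g0 / (2 * h0) = (-(g0 / h0)) / 2 := by
      rw [neg_div, neg_div, div_div, mul_comm]
    rw [hkey]; linarith
  set A : ℝ := Real.sqrt (-g0 / (2 * h0)) with hAdef
  have hA2 : A ^ 2 = -g0 / (2 * h0) := Real.sq_sqrt hpos.le
  have hAnn : (0:ℝ) ≤ A := Real.sqrt_nonneg _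
  -- time derivatives
  have hqT : HasDerivAt (fun s => α s * x ^ 2 + β s * x + γ s)
      (deriv α t * x ^ 2 + deriv β t * x + deriv γ t) t :=
    (((hαdiff t).hasDerivAt.mul_const _).add ((hβdiff t).hasDerivAt.mul_const _)).add
      (hγdiff t).hasDerivAt
  have hT1 : deriv (fun t' => ((A:ℝ):ℂ) * Complex.exp (Complex.I * ((α t' * x ^ 2 + β t' * x + γ t' : ℝ):ℂ))) t
      = ((A:ℝ):ℂ) * (Complex.I * ((deriv α t * x ^ 2 + deriv β t * x + deriv γ t : ℝ):ℂ))
        * Complex.exp (Complex.I * ((α t * x ^ 2 + β t * x + γ t : ℝ):ℂ)) :=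
    (hasDerivAt_A_exp _ _ hqT).deriv
  have hT2 : deriv (fun t' => ((A:ℝ):ℂ) * Complex.exp (-(Complex.I * ((α t' * x ^ 2 + β t' * x + γ t' : ℝ):ℂ)))) t
      = ((A:ℝ):ℂ) * (-Complex.I * ((deriv α t * x ^ 2 + deriv β t * x + deriv γ t : ℝ):ℂ))
        * Complex.exp (-(Complex.I * ((α t * x ^ 2 + β t * x + γ t : ℝ):ℂ))) := by
    have := (hasDerivAt_A_exp ((A:ℝ):ℂ) (-Complex.I) hqT).deriv
    simpa [neg_mul] using this
  -- first space derivatives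
  have hX1 : deriv (fun x' => ((A:ℝ):ℂ) * Complex.exp (Complex.I * ((α t * x' ^ 2 + β t * x' + γ t : ℝ):ℂ))) x
      = ((A:ℝ):ℂ) * (Complex.I * ((2 * α t * x + β t : ℝ):ℂ))
        * Complex.exp (Complex.I * ((α t * x ^ 2 + β t * x + γ t : ℝ):ℂ)) :=
    (hasDerivAt_A_exp _ _ (hasDerivAt_quad _ _ _ x)).deriv
  have hX2 : deriv (fun x' => ((A:ℝ):ℂ) * Complex.exp (-(Complex.I * ((α t * x' ^ 2 + β t * x' + γ t : ℝ):ℂ)))) x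
      = ((A:ℝ):ℂ) * (-Complex.I * ((2 * α t * x + β t : ℝ):ℂ))
        * Complex.exp (-(Complex.I * ((α t * x ^ 2 + β t * x + γ t : ℝ):ℂ))) := by
    have := (hasDerivAt_A_exp ((A:ℝ):ℂ) (-Complex.I) (hasDerivAt_quad (α t) (β t) (γ t) x)).deriv
    simpa [neg_mul] using this
  -- second space derivatives
  have hlin : HasDerivAt (fun x' : ℝ => 2 * α t * x' + β t) (2 * α t) x := by
    simpa using ((hasDerivAt_id x).const_mul (2 * α t)).add_const (β t)
  have hu1 : HasDerivAt (fun x' : ℝ => ((A:ℝ):ℂ) * (Complex.I * ((2 * α t * x' + β t : ℝ):ℂ)))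
      (((A:ℝ):ℂ) * (Complex.I * ((2 * α t : ℝ):ℂ))) x :=
    (hlin.ofReal_comp.const_mul Complex.I).const_mul _
  have hv1 : HasDerivAt (fun x' : ℝ => Complex.exp (Complex.I * ((α t * x' ^ 2 + β t * x' + γ t : ℝ):ℂ)))
      (Complex.I * ((2 * α t * x + β t : ℝ):ℂ)
        * Complex.exp (Complex.I * ((α t * x ^ 2 + β t * x + γ t : ℝ):ℂ))) x := by
    have := (((hasDerivAt_quad (α t) (β t) (γ t) x).ofReal_comp.const_mul Complex.I)).cexp
    simpa [mul_comm, mul_assoc, mul_left_comm] using this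
  have hXX1 : iteratedDeriv 2 (fun x' => ((A:ℝ):ℂ) * Complex.exp (Complex.I * ((α t * x' ^ 2 + β t * x' + γ t : ℝ):ℂ))) x
      = ((A:ℝ):ℂ) * (Complex.I * ((2 * α t : ℝ):ℂ))
          * Complex.exp (Complex.I * ((α t * x ^ 2 + β t * x + γ t : ℝ):ℂ))
        + ((A:ℝ):ℂ) * (Complex.I * ((2 * α t * x + β t : ℝ):ℂ))
          * (Complex.I * ((2 * α t * x + β t : ℝ):ℂ)
            * Complex.exp (Complex.I * ((α t * x ^ 2 + β t * x + γ t : ℝ):ℂ))) := by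
    rw [show (2:ℕ) = 1 + 1 from rfl, iteratedDeriv_succ, iteratedDeriv_one]
    have hfun : deriv (fun x' => ((A:ℝ):ℂ) * Complex.exp (Complex.I * ((α t * x' ^ 2 + β t * x' + γ t : ℝ):ℂ)))
        = fun x' => ((A:ℝ):ℂ) * (Complex.I * ((2 * α t * x' + β t : ℝ):ℂ))
          * Complex.exp (Complex.I * ((α t * x' ^ 2 + β t * x' + γ t : ℝ):ℂ)) :=
      funext fun x' => (hasDerivAt_A_exp _ _ (hasDerivAt_quad _ _ _ x')).deriv
    rw [hfun]
    exact (hu1.mul hv1).deriv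
  have hu2 : HasDerivAt (fun x' : ℝ => ((A:ℝ):ℂ) * (-Complex.I * ((2 * α t * x' + β t : ℝ):ℂ)))
      (((A:ℝ):ℂ) * (-Complex.I * ((2 * α t : ℝ):ℂ))) x :=
    (hlin.ofReal_comp.const_mul (-Complex.I)).const_mul _
  have hv2 : HasDerivAt (fun x' : ℝ => Complex.exp (-(Complex.I * ((α t * x' ^ 2 + β t * x' + γ t : ℝ):ℂ))))
      (-Complex.I * ((2 * α t * x + β t : ℝ):ℂ)
        * Complex.exp (-(Complex.I * ((α t * x ^ 2 + β t * x + γ t : ℝ):ℂ)))) x := by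
    have := (((hasDerivAt_quad (α t) (β t) (γ t) x).ofReal_comp.const_mul (-Complex.I))).cexp
    simpa [neg_mul, mul_comm, mul_assoc, mul_left_comm] using this
  have hXX2 : iteratedDeriv 2 (fun x' => ((A:ℝ):ℂ) * Complex.exp (-(Complex.I * ((α t * x' ^ 2 + β t * x' + γ t : ℝ):ℂ)))) x
      = ((A:ℝ):ℂ) * (-Complex.I * ((2 * α t : ℝ):ℂ))
          * Complex.exp (-(Complex.I * ((α t * x ^ 2 + β t * x + γ t : ℝ):ℂ)))
        + ((A:ℝ):ℂ) * (-Complex.I * ((2 * α t * x + β t : ℝ):ℂ))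
          * (-Complex.I * ((2 * α t * x + β t : ℝ):ℂ)
            * Complex.exp (-(Complex.I * ((α t * x ^ 2 + β t * x + γ t : ℝ):ℂ)))) := by
    rw [show (2:ℕ) = 1 + 1 from rfl, iteratedDeriv_succ, iteratedDeriv_one]
    have hfun : deriv (fun x' => ((A:ℝ):ℂ) * Complex.exp (-(Complex.I * ((α t * x' ^ 2 + β t * x' + γ t : ℝ):ℂ))))
        = fun x' => ((A:ℝ):ℂ) * (-Complex.I * ((2 * α t * x' + β t : ℝ):ℂ))
          * Complex.exp (-(Complex.I * ((α t * x' ^ 2 + β t * x' + γ t : ℝ):ℂ))) := by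
      funext x'
      have := (hasDerivAt_A_exp ((A:ℝ):ℂ) (-Complex.I) (hasDerivAt_quad (α t) (β t) (γ t) x')).deriv
      simpa [neg_mul] using this
    rw [hfun]
    exact (hu2.mul hv2).deriv
  -- norms
  have hnA : ‖((A:ℝ):ℂ)‖ = A := by
    rw [Complex.norm_real, Real.norm_eq_abs, abs_of_nonneg hAnn]
  have hn1 : ‖((A:ℝ):ℂ) * Complex.exp (Complex.I * ((α t * x ^ 2 + β t * x + γ t : ℝ):ℂ))‖ ^ 2 = A ^ 2 := by
    rw [norm_mul, hnA, mul_comm Complex.I, Complex.norm_exp_ofReal_mul_I,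
      mul_one]
  have hn2 : ‖((A:ℝ):ℂ) * Complex.exp (-(Complex.I * ((α t * x ^ 2 + β t * x + γ t : ℝ):ℂ)))‖ ^ 2 = A ^ 2 := by
    have hrw : -(Complex.I * ((α t * x ^ 2 + β t * x + γ t : ℝ):ℂ))
        = ((-(α t * x ^ 2 + β t * x + γ t) : ℝ):ℂ) * Complex.I := by
      push_cast; ring
    rw [norm_mul, hnA, hrw, Complex.norm_exp_ofReal_mul_I, mul_one]
  have hterm : ((h t : ℝ):ℂ) * (((‖((A:ℝ):ℂ) * Complex.exp (Complex.I * ((α t * x ^ 2 + β t * x + γ t : ℝ):ℂ))‖ ^ 2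
        + ‖((A:ℝ):ℂ) * Complex.exp (-(Complex.I * ((α t * x ^ 2 + β t * x + γ t : ℝ):ℂ)))‖ ^ 2 : ℝ)):ℂ)
      = ((-(g0 * a t * β t ^ 2) : ℝ):ℂ) := by
    rw [hn1, hn2, hh t, hA2]
    norm_cast
    field_simp
    ring
  have e1 : deriv α t = -(b t + 2 * c t * α t + 4 * a t * α t ^ 2) := by linarith [hRic1 t]
  have e2 : deriv β t = -((c t + 4 * a t * α t) * β t) := by linarith [hRic2 t]
  have e3 : deriv γ t = -(a t * β t ^ 2) := by linarith [hRic3 t]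
  simp only [hθ]
  constructor
  · simp only [pderivT, pderivX, pderivXX]
    rw [hT1, hX1, hXX1, hterm, hd t, hg t, e1, e2, e3]
    push_cast
    ring_nf
    simp only [Complex.I_sq]
    ring
  · simp only [pderivT, pderivX, pderivXX]
    rw [hT2, hX2, hXX2, hterm, hd t, hg t, e1, e2, e3]
    push_cast
    ring_nf
    simp only [Complex.I_sq]
    ring
end

section
/- Let a, h, w, k be real numbers and let P ≥ 0, Q ≥ 0 be real numbers (representing |ψ0|² and |φ0|²). Let M be the 4×4 real matrix with rows: row 1 = (w - a k² - h P, -h P, -h Q, -h Q); row 2 = (-h P, -w - a k² - h P, -h Q, -h Q); row 3 = (h P, h P, w + a k² + h Q, h Q); row 4 = (h P, h P, h Q, -w + a k² + h Q). Then det M = 0 if and only if w² = a²k⁴ or w² = a²k⁴ + 2·a·h·k²·(P + Q). -/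
/-- Dispersion relation of the modulational-instability analysis: the
determinant of the linearization matrix vanishes iff
`w² = a²k⁴` or `w² = a²k⁴ + 2 a h k² (P + Q)`. -/
theorem dispersion_relation_det
    (a h w k P Q : ℝ) (hP : 0 ≤ P) (hQ : 0 ≤ Q) :
    (Matrix.det !![w - a * k ^ 2 - h * P, -(h * P), -(h * Q), -(h * Q);
        -(h * P), -w - a * k ^ 2 - h * P, -(h * Q), -(h * Q);
        h * P, h * P, w + a * k ^ 2 + h * Q, h * Q;
        h * P, h * P, h * Q, -w + a * k ^ 2 + h * Q] = 0)
      ↔ (w ^ 2 = a ^ 2 * k ^ 4 ∨ w ^ 2 = a ^ 2 * k ^ 4 + 2 * a * h * k ^ 2 * (P + Q)) := by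
  have hdet : Matrix.det !![w - a * k ^ 2 - h * P, -(h * P), -(h * Q), -(h * Q);
        -(h * P), -w - a * k ^ 2 - h * P, -(h * Q), -(h * Q);
        h * P, h * P, w + a * k ^ 2 + h * Q, h * Q;
        h * P, h * P, h * Q, -w + a * k ^ 2 + h * Q]
      = (w ^ 2 - a ^ 2 * k ^ 4) *
        (w ^ 2 - (a ^ 2 * k ^ 4 + 2 * a * h * k ^ 2 * (P + Q))) := by
    simp [Matrix.det_succ_row_zero, Fin.sum_univ_succ, Fin.succAbove,
      Fin.castSucc, Fin.castAdd, Fin.castLE]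
    ring
  rw [hdet, mul_eq_zero, sub_eq_zero, sub_eq_zero]
end
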